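/- For Z ~ N(δ,1) and A = max(Z, −Z/k), the expectation satisfies E[A] = δ + (1 + 1/k)·(φ(δ) − δ·Φ(−δ)) for δ ≥ 0 — equivalently E[max(Z,−Z/k)] = δ·Φ(δ) − δ·Φ(−δ)/k + (1+1/k)·φ(δ), which yields the unbiasedness-correction term (1+k^{−1})(φ(|δ|) − |δ|Φ(−|δ|)) appearing in E[\hat{C}_{pku,n}]. -/

import Mathlib

open MeasureTheory ProbabilityTheory

noncomputable def stdNormalPdf (x : ℝ) : ℝ := Real.exp (-x ^ 2 / 2) / Real.sqrt (2 * Real.pi)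

noncomputable def stdNormalCdf (x : ℝ) : ℝ := ∫ t in Set.Iic x, stdNormalPdf t

open Real Set Filter in
lemma stdNormalPdf_even (x : ℝ) : stdNormalPdf (-x) = stdNormalPdf x := by
  simp [stdNormalPdf]

open Real Set Filter in
lemma continuous_stdNormalPdf : Continuous stdNormalPdf := by
  unfold stdNormalPdf; fun_prop

open Real Set Filter in
lemma hasDerivAt_stdNormalPdf (x : ℝ) :
    HasDerivAt stdNormalPdf (-x * stdNormalPdf x) x := by
  have h1 : HasDerivAt (fun x : ℝ => -x ^ 2 / 2) (-x) x := by
    have := ((hasDerivAt_pow 2 x).neg).div_const 2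
    refine this.congr_deriv ?_
    ring
  have h2 := (h1.exp).div_const (Real.sqrt (2 * Real.pi))
  refine h2.congr_deriv ?_
  unfold stdNormalPdf
  ring

open Real Set Filter in
lemma tendsto_stdNormalPdf_atTop : Tendsto stdNormalPdf atTop (nhds 0) := by
  have h1 : Tendsto (fun x : ℝ => -x ^ 2 / 2) atTop atBot := by
    apply Tendsto.atBot_div_const two_pos
    exact tendsto_neg_atTop_atBot.comp (tendsto_pow_atTop two_ne_zero)
  have h2 := (Real.tendsto_exp_atBot.comp h1).div_const (Real.sqrt (2 * Real.pi))
  unfold stdNormalPdf; simpa only [Function.comp_def, zero_div] using h2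

open Real Set Filter in
lemma tendsto_stdNormalPdf_atBot : Tendsto stdNormalPdf atBot (nhds 0) := by
  have := tendsto_stdNormalPdf_atTop.comp tendsto_neg_atBot_atTop
  refine this.congr fun x => ?_
  simp [Function.comp_def, stdNormalPdf_even]

open Real Set Filter in
lemma integrable_stdNormalPdf : Integrable stdNormalPdf := by
  have := (integrable_exp_neg_mul_sq (b := 1/2) (by norm_num)).div_const
    (Real.sqrt (2 * Real.pi))
  refine this.congr (Eventually.of_forall fun x => ?_)
  unfold stdNormalPdf
  ring_nf

open Real Set Filter in
lemma integrable_id_mul_stdNormalPdf : Integrable (fun x => x * stdNormalPdf x) := by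
  have h := (integrable_rpow_mul_exp_neg_mul_sq (b := 1/2) (by norm_num)
    (s := 1) (by norm_num)).div_const (Real.sqrt (2 * Real.pi))
  refine h.congr (Eventually.of_forall fun x => ?_)
  simp only [Real.rpow_one]
  unfold stdNormalPdf
  ring_nf

open Real Set Filter in
lemma integral_Iic_neg_mul_stdNormalPdf (a : ℝ) :
    ∫ x in Iic a, -x * stdNormalPdf x = stdNormalPdf a := by
  have := integral_Iic_of_hasDerivAt_of_tendsto (f := stdNormalPdf)
    (f' := fun x => -x * stdNormalPdf x) (a := a) (m := 0)
    continuous_stdNormalPdf.continuousWithinAt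
    (fun x _ => hasDerivAt_stdNormalPdf x)
    ((integrable_id_mul_stdNormalPdf.neg.congr
      (Eventually.of_forall fun x => by rw [Pi.neg_apply]; ring)).integrableOn)
    tendsto_stdNormalPdf_atBot
  simpa using this

open Real Set Filter in
lemma stdNormalPdf_eq_gaussian (x : ℝ) : gaussianPDFReal 0 1 x = stdNormalPdf x := by
  simp [gaussianPDFReal, stdNormalPdf]
  ring_nf

open Real Set Filter in
lemma integral_stdNormalPdf : ∫ x, stdNormalPdf x = 1 := by
  rw [← integral_gaussianPDFReal_eq_one 0 one_ne_zero]
  exact integral_congr_ae (Eventually.of_forall fun x => (stdNormalPdf_eq_gaussian x).symm)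

open Real Set Filter in
lemma stdNormalCdf_neg (a : ℝ) : stdNormalCdf (-a) = ∫ x in Ici a, stdNormalPdf x := by
  unfold stdNormalCdf
  have := (Measure.measurePreserving_neg (volume : Measure ℝ)).setIntegral_preimage_emb
    (Homeomorph.neg ℝ).measurableEmbedding stdNormalPdf (Iic (-a))
  rw [← this]
  have hpre : (Neg.neg : ℝ → ℝ) ⁻¹' (Iic (-a)) = Ici a := by
    ext x; simp
  rw [hpre]
  exact setIntegral_congr_fun measurableSet_Ici fun x _ => stdNormalPdf_even x

open Real Set Filter in
lemma stdNormalCdf_add_neg (a : ℝ) : stdNormalCdf a + stdNormalCdf (-a) = 1 := by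
  rw [stdNormalCdf_neg, show stdNormalCdf a = ∫ x in Iic a, stdNormalPdf x from rfl,
    integral_Ici_eq_integral_Ioi,
    intervalIntegral.integral_Iic_add_Ioi integrable_stdNormalPdf.integrableOn
      integrable_stdNormalPdf.integrableOn, integral_stdNormalPdf]

open Real Set Filter in
lemma gaussianPDFReal_eq (δ x : ℝ) : gaussianPDFReal δ 1 x = stdNormalPdf (x - δ) := by
  simp [gaussianPDFReal, stdNormalPdf]
  ring_nf

open Real Set Filter in
lemma integrable_shift (δ : ℝ) (g : ℝ → ℝ) (hg : Integrable g) :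
    Integrable (fun x => g (x - δ)) :=
  hg.comp_sub_right δ

open Real Set Filter in
lemma setIntegral_shift (δ a : ℝ) (g : ℝ → ℝ) :
    ∫ x in Iic a, g (x - δ) = ∫ t in Iic (a - δ), g t := by
  have := (measurePreserving_sub_right (volume : Measure ℝ) δ).setIntegral_preimage_emb
    (Homeomorph.subRight δ).measurableEmbedding g (Iic (a - δ))
  rw [← this]
  congr 1
  ext x; simp [sub_le_sub_iff_right]

open Real Set Filter in
lemma integral_mul_pdf_shift (δ : ℝ) : ∫ x, x * stdNormalPdf (x - δ) = δ := by
  have h : ∀ x : ℝ, x * stdNormalPdf (x - δ) =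
      (fun t => (t + δ) * stdNormalPdf t) (x - δ) := by
    intro x; simp
  rw [integral_congr_ae (Eventually.of_forall h),
    integral_sub_right_eq_self (fun t => (t + δ) * stdNormalPdf t) δ]
  have hsplit : ∀ t : ℝ, (t + δ) * stdNormalPdf t =
      t * stdNormalPdf t + δ * stdNormalPdf t := fun t => by ring
  rw [integral_congr_ae (Eventually.of_forall hsplit),
    integral_add integrable_id_mul_stdNormalPdf (integrable_stdNormalPdf.const_mul δ),
    integral_const_mul, integral_stdNormalPdf]
  have hodd : ∫ t, t * stdNormalPdf t = 0 := by
    have h2 : ∫ t : ℝ, -t * stdNormalPdf (-t) = ∫ t, t * stdNormalPdf t := by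
      exact integral_neg_eq_self (fun t => t * stdNormalPdf t) volume
    have h3 : ∀ t : ℝ, -t * stdNormalPdf (-t) = -(t * stdNormalPdf t) := by
      intro t; rw [stdNormalPdf_even]; ring
    rw [integral_congr_ae (Eventually.of_forall h3), integral_neg] at h2
    linarith
  rw [hodd]
  ring

open Real Set Filter in
lemma max_decomp (k x : ℝ) (hk : k > 1) :
    max x (-x / k) = x + (1 + 1/k) * max (-x) 0 := by
  have hk0 : (0:ℝ) < k := lt_trans one_pos hk
  rcases le_or_gt 0 x with hx | hx
  · rw [max_eq_left, max_eq_right (by linarith)]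
    · ring
    · rw [div_le_iff₀ hk0]; nlinarith
  · rw [max_eq_right, max_eq_left (by linarith)]
    · field_simp; ring
    · rw [le_div_iff₀ hk0]; nlinarith

open Real Set Filter in
lemma integrable_max_mul (δ k : ℝ) :
    Integrable (fun x => max x (-x / k) * stdNormalPdf (x - δ)) := by
  have hint : Integrable (fun x => x * stdNormalPdf (x - δ)) := by
    have h : Integrable (fun t : ℝ => (t + δ) * stdNormalPdf t) := by
      have := integrable_id_mul_stdNormalPdf.add (integrable_stdNormalPdf.const_mul δ)
      refine this.congr (Eventually.of_forall fun t => ?_)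
      simp only [Pi.add_apply]; ring
    have := h.comp_sub_right δ
    refine this.congr (Eventually.of_forall fun x => ?_); simp
  refine (hint.abs.const_mul (1 + |1/k|)).mono' ?_ ?_
  · apply Continuous.aestronglyMeasurable
    exact ((continuous_id.max (continuous_id.neg.div_const k)).mul
      (continuous_stdNormalPdf.comp (continuous_id.sub continuous_const)))
  · refine Eventually.of_forall fun x => ?_
    have hp : 0 ≤ stdNormalPdf (x - δ) := by
      unfold stdNormalPdf; positivity
    rw [Real.norm_eq_abs, abs_mul, abs_of_nonneg hp]
    have h1 : |max x (-x / k)| ≤ (1 + |1/k|) * |x| := by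
      rcases abs_max_le_max_abs_abs (a := x) (b := -x/k) with h
      have h2 : max |x| |(-x/k)| ≤ (1 + |1/k|) * |x| := by
        rw [max_le_iff]
        constructor
        · nlinarith [abs_nonneg x, abs_nonneg (1/k)]
        · have : |(-x/k)| = |1/k| * |x| := by
            rw [show -x/k = -((1/k)*x) by ring, abs_neg, abs_mul]
          rw [this]
          nlinarith [abs_nonneg x]
      exact le_trans h h2
    calc |max x (-x / k)| * stdNormalPdf (x - δ)
        ≤ (1 + |1/k|) * |x| * stdNormalPdf (x - δ) :=
          mul_le_mul_of_nonneg_right h1 hp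
      _ = (1 + |1/k|) * |x * stdNormalPdf (x - δ)| := by
          rw [abs_mul, abs_of_nonneg hp]; ring

open Real Set Filter in
lemma integral_max_neg_mul (δ : ℝ) :
    ∫ x, max (-x) 0 * stdNormalPdf (x - δ) = stdNormalPdf δ - δ * stdNormalCdf (-δ) := by
  have hind : (fun x => max (-x) 0 * stdNormalPdf (x - δ)) =
      Set.indicator (Iic 0) (fun x => -x * stdNormalPdf (x - δ)) := by
    ext x
    rcases le_or_gt x 0 with hx | hx
    · rw [Set.indicator_of_mem (by exact hx)]
      rw [max_eq_left (by linarith)]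
    · rw [Set.indicator_of_notMem (by simpa using hx)]
      rw [max_eq_right (by linarith)]
      ring
  rw [hind, integral_indicator measurableSet_Iic]
  have hcomp : ∀ x : ℝ, -x * stdNormalPdf (x - δ) =
      (fun t => -(t + δ) * stdNormalPdf t) (x - δ) := by intro x; simp
  rw [setIntegral_congr_fun measurableSet_Iic (fun x _ => hcomp x),
    setIntegral_shift δ 0 (fun t => -(t + δ) * stdNormalPdf t), zero_sub]
  have hsplit : ∀ t ∈ Iic (-δ), -(t + δ) * stdNormalPdf t =
      -t * stdNormalPdf t + (-δ) * stdNormalPdf t := fun t _ => by ring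
  rw [setIntegral_congr_fun measurableSet_Iic hsplit,
    integral_add ((integrable_id_mul_stdNormalPdf.neg.congr
      (Eventually.of_forall fun x => by rw [Pi.neg_apply]; ring)).integrableOn)
      ((integrable_stdNormalPdf.const_mul (-δ)).integrableOn),
    integral_Iic_neg_mul_stdNormalPdf, integral_const_mul, stdNormalPdf_even]
  show stdNormalPdf δ + -δ * stdNormalCdf (-δ) = _
  ring

open Real Set Filter in
lemma main_real_integral (δ k : ℝ) (hk : k > 1) :
    ∫ x, max x (-x / k) * stdNormalPdf (x - δ) =
      δ * stdNormalCdf δ - (δ / k) * stdNormalCdf (-δ) + (1 + 1 / k) * stdNormalPdf δ := by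
  have hdecomp : ∀ x : ℝ, max x (-x / k) * stdNormalPdf (x - δ) =
      x * stdNormalPdf (x - δ) + (1 + 1/k) * (max (-x) 0 * stdNormalPdf (x - δ)) := by
    intro x; rw [max_decomp k x hk]; ring
  have hint1 : Integrable (fun x => x * stdNormalPdf (x - δ)) := by
    have h : Integrable (fun t : ℝ => (t + δ) * stdNormalPdf t) := by
      have := integrable_id_mul_stdNormalPdf.add (integrable_stdNormalPdf.const_mul δ)
      refine this.congr (Eventually.of_forall fun t => ?_)
      simp only [Pi.add_apply]; ring
    have := h.comp_sub_right δ
    refine this.congr (Eventually.of_forall fun x => ?_); simp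
  have hint2 : Integrable (fun x => max (-x) 0 * stdNormalPdf (x - δ)) := by
    refine hint1.abs.mono' ?_ ?_
    · apply Continuous.aestronglyMeasurable
      exact ((continuous_id.neg.max continuous_const).mul
        (continuous_stdNormalPdf.comp (continuous_id.sub continuous_const)))
    · refine Eventually.of_forall fun x => ?_
      have hp : 0 ≤ stdNormalPdf (x - δ) := by unfold stdNormalPdf; positivity
      rw [Real.norm_eq_abs, abs_mul, abs_of_nonneg hp, abs_mul, abs_of_nonneg hp]
      apply mul_le_mul_of_nonneg_right _ hp
      rw [abs_of_nonneg (le_max_right _ _)]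
      rcases le_or_gt 0 x with hx | hx
      · rw [max_eq_right (by linarith)]; positivity
      · rw [max_eq_left (by linarith), abs_of_neg hx]
  rw [integral_congr_ae (Eventually.of_forall hdecomp),
    integral_add hint1 (hint2.const_mul _), integral_const_mul,
    integral_mul_pdf_shift, integral_max_neg_mul]
  have hsum := stdNormalCdf_add_neg δ
  have hk0 : k ≠ 0 := by positivity
  field_simp
  linear_combination (-(δ*k)) * hsum

theorem stmt_19 (δ k : ℝ) (hk : k > 1)
    {Ω : Type*} [MeasureSpace Ω] (P : Measure Ω) [IsProbabilityMeasure P]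
    (Z : Ω → ℝ) (hZ : Measure.map Z P = gaussianReal δ 1) :
    ∫ ω, max (Z ω) (-(Z ω) / k) ∂P =
      δ * stdNormalCdf δ - (δ / k) * stdNormalCdf (-δ) + (1 + 1 / k) * stdNormalPdf δ := by
  have hZae : AEMeasurable Z P := by
    apply aemeasurable_of_map_neZero
    rw [hZ]
    infer_instance
  have hf : Continuous (fun x : ℝ => max x (-x / k)) :=
    continuous_id.max (continuous_id.neg.div_const k)
  have h1 : ∫ ω, max (Z ω) (-(Z ω) / k) ∂P
      = ∫ x, max x (-x / k) ∂(Measure.map Z P) := by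
    rw [integral_map hZae hf.aestronglyMeasurable]
  rw [h1, hZ, gaussianReal_of_var_ne_zero δ one_ne_zero]
  have hdens : (gaussianPDF δ 1) = fun x => ((gaussianPDFReal δ 1 x).toNNReal : ENNReal) := by
    funext x
    rw [gaussianPDF_def]
    rfl
  rw [hdens, integral_withDensity_eq_integral_smul
    ((measurable_gaussianPDFReal δ 1).real_toNNReal) (fun x => max x (-x / k))]
  have heq : ∀ x : ℝ, (gaussianPDFReal δ 1 x).toNNReal • max x (-x / k)
      = max x (-x / k) * stdNormalPdf (x - δ) := by
    intro x
    rw [NNReal.smul_def, smul_eq_mul, Real.coe_toNNReal _ (gaussianPDFReal_nonneg δ 1 x),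
      gaussianPDFReal_eq]
    ring
  rw [integral_congr_ae (Filter.Eventually.of_forall heq)]
  exact main_real_integral δ k hk
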